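/- For λ ∉ {2,6,8}, the eigenvalue equation on the interior points of a subdivided tetrahedral cell has the unique solution u(Y_1) = [(4−λ)(u(X_0)+u(X_1)) + 2(u(X_2)+u(X_3))] / [(2−λ)(6−λ)] (and symmetrically for Y_2,...,Y_6). -/
import Mathlib


/-- For `λ ∉ {2,6,8}`, the eigenvalue equations at the six interior (midpoint)
points `Y₁, …, Y₆` of a subdivided tetrahedral cell with boundary values
`u(X₀) = u₀, …, u(X₃) = u₃` have the unique solution
`u(Y₁) = [(4−λ)(u₀+u₁) + 2(u₂+u₃)] / [(2−λ)(6−λ)]`, and symmetrically. -/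
theorem sierpinski_tetrahedron_cell_eigen_solution
    (l u₀ u₁ u₂ u₃ y₁ y₂ y₃ y₄ y₅ y₆ : ℝ)
    (hl : l ∉ ({2, 6, 8} : Set ℝ))
    (h₁ : (6 - l) * y₁ = u₀ + u₁ + y₂ + y₃ + y₄ + y₅)
    (h₂ : (6 - l) * y₂ = u₁ + u₂ + y₁ + y₃ + y₅ + y₆)
    (h₃ : (6 - l) * y₃ = u₀ + u₂ + y₁ + y₂ + y₄ + y₆)
    (h₄ : (6 - l) * y₄ = u₀ + u₃ + y₁ + y₃ + y₅ + y₆)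
    (h₅ : (6 - l) * y₅ = u₁ + u₃ + y₁ + y₂ + y₄ + y₆)
    (h₆ : (6 - l) * y₆ = u₂ + u₃ + y₂ + y₃ + y₄ + y₅) :
    y₁ = ((4 - l) * (u₀ + u₁) + 2 * (u₂ + u₃)) / ((2 - l) * (6 - l)) ∧
    y₂ = ((4 - l) * (u₁ + u₂) + 2 * (u₀ + u₃)) / ((2 - l) * (6 - l)) ∧
    y₃ = ((4 - l) * (u₀ + u₂) + 2 * (u₁ + u₃)) / ((2 - l) * (6 - l)) ∧
    y₄ = ((4 - l) * (u₀ + u₃) + 2 * (u₁ + u₂)) / ((2 - l) * (6 - l)) ∧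
    y₅ = ((4 - l) * (u₁ + u₃) + 2 * (u₀ + u₂)) / ((2 - l) * (6 - l)) ∧
    y₆ = ((4 - l) * (u₂ + u₃) + 2 * (u₀ + u₁)) / ((2 - l) * (6 - l)) := by
  simp only [Set.mem_insert_iff, Set.mem_singleton_iff, not_or] at hl
  obtain ⟨hl2, hl6, hl8⟩ := hl
  have h2 : (2 : ℝ) - l ≠ 0 := sub_ne_zero.mpr (fun h => hl2 h.symm)
  have h6 : (6 : ℝ) - l ≠ 0 := sub_ne_zero.mpr (fun h => hl6 h.symm)
  have h8 : (8 : ℝ) - l ≠ 0 := sub_ne_zero.mpr (fun h => hl8 h.symm)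
  have hd : (2 - l) * (6 - l) ≠ 0 := mul_ne_zero h2 h6
  -- sum of all six equations
  have hS : (2 - l) * (y₁ + y₂ + y₃ + y₄ + y₅ + y₆) = 3 * (u₀ + u₁ + u₂ + u₃) := by
    linarith
  -- opposite-pair sums
  have hq1 : (2 - l) * (y₁ + y₆) = u₀ + u₁ + u₂ + u₃ := by
    have key : (8 - l) * ((2 - l) * (y₁ + y₆) - (u₀ + u₁ + u₂ + u₃)) = 0 := by
      linear_combination (2 - l) * h₁ + (2 - l) * h₆ + 2 * hS
    rcases mul_eq_zero.mp key with h | h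
    · exact absurd h h8
    · linarith
  have hq2 : (2 - l) * (y₂ + y₄) = u₀ + u₁ + u₂ + u₃ := by
    have key : (8 - l) * ((2 - l) * (y₂ + y₄) - (u₀ + u₁ + u₂ + u₃)) = 0 := by
      linear_combination (2 - l) * h₂ + (2 - l) * h₄ + 2 * hS
    rcases mul_eq_zero.mp key with h | h
    · exact absurd h h8
    · linarith
  have hq3 : (2 - l) * (y₃ + y₅) = u₀ + u₁ + u₂ + u₃ := by
    have key : (8 - l) * ((2 - l) * (y₃ + y₅) - (u₀ + u₁ + u₂ + u₃)) = 0 := by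
      linear_combination (2 - l) * h₃ + (2 - l) * h₅ + 2 * hS
    rcases mul_eq_zero.mp key with h | h
    · exact absurd h h8
    · linarith
  -- opposite-pair differences
  have hd1 : (6 - l) * (y₁ - y₆) = u₀ + u₁ - u₂ - u₃ := by linarith
  have hd2 : (6 - l) * (y₂ - y₄) = u₁ + u₂ - u₀ - u₃ := by linarith
  have hd3 : (6 - l) * (y₃ - y₅) = u₀ + u₂ - u₁ - u₃ := by linarith
  refine ⟨?_, ?_, ?_, ?_, ?_, ?_⟩
  · rw [eq_div_iff hd]; linear_combination ((6 - l) / 2) * hq1 + ((2 - l) / 2) * hd1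
  · rw [eq_div_iff hd]; linear_combination ((6 - l) / 2) * hq2 + ((2 - l) / 2) * hd2
  · rw [eq_div_iff hd]; linear_combination ((6 - l) / 2) * hq3 + ((2 - l) / 2) * hd3
  · rw [eq_div_iff hd]; linear_combination ((6 - l) / 2) * hq2 - ((2 - l) / 2) * hd2
  · rw [eq_div_iff hd]; linear_combination ((6 - l) / 2) * hq3 - ((2 - l) / 2) * hd3
  · rw [eq_div_iff hd]; linear_combination ((6 - l) / 2) * hq1 - ((2 - l) / 2) * hd1
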